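/- For a final permutation w of {1,…,2g} define ψ_w : {0,…,2g} → ℕ by ψ_w(i) = i − #{a ∈ {1,…,g} : w(a) ≤ i} for 0 ≤ i ≤ g and ψ_w(2g−i) = ψ_w(i) + g − i for 0 ≤ i ≤ g. Then ψ_w is a final sequence of length g, and the assignment w ↦ ψ_w is a bijection from the set of final permutations of {1,…,2g} onto the set of final sequences of length g. -/

import Mathlib

/-- A permutation `w` of `{1, …, 2g}` (modelled on `Fin (2*g)`, `0`-based index `i`
corresponding to `i + 1`) is *final* if `w (i) + w (2g+1-i) = 2g+1` for all `i` and
`w (1) < w (2) < ⋯ < w (g)`. -/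
def IsFinalPerm (g : ℕ) (w : Equiv.Perm (Fin (2 * g))) : Prop :=
  (∀ i : Fin (2 * g), ((w i : ℕ) + 1) + ((w i.rev : ℕ) + 1) = 2 * g + 1) ∧
  (∀ i j : Fin (2 * g), i < j → (j : ℕ) < g → w i < w j)

/-- A *final sequence* of length `g` is a map `ψ : {0, …, 2g} → ℕ` with `ψ 0 = 0`,
`ψ (2g) = g`, `ψ i ≤ ψ (i+1) ≤ ψ i + 1` and `(ψ i < ψ (i+1) ↔ ψ (2g-i) = ψ (2g-i-1))`
for all `0 ≤ i < 2g`. -/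
def IsFinalSeq (g : ℕ) (ψ : Fin (2 * g + 1) → ℕ) : Prop :=
  ψ ⟨0, by omega⟩ = 0 ∧ ψ ⟨2 * g, by omega⟩ = g ∧
  ∀ i : ℕ, ∀ _ : i < 2 * g,
    ψ ⟨i, by omega⟩ ≤ ψ ⟨i + 1, by omega⟩ ∧
    ψ ⟨i + 1, by omega⟩ ≤ ψ ⟨i, by omega⟩ + 1 ∧
    (ψ ⟨i, by omega⟩ < ψ ⟨i + 1, by omega⟩ ↔
      ψ ⟨2 * g - i, by omega⟩ = ψ ⟨2 * g - i - 1, by omega⟩)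

/-- The sequence `ψ_w` associated with a final permutation `w`:
`ψ_w (i) = i - #{a ∈ {1, …, g} : w (a) ≤ i}` for `0 ≤ i ≤ g`, and
`ψ_w (2g - i) = ψ_w (i) + g - i` for `0 ≤ i ≤ g`. -/
def psiOfPerm (g : ℕ) (w : Equiv.Perm (Fin (2 * g))) (i : ℕ) : ℕ :=
  if i ≤ g then
    i - (Finset.univ.filter
      (fun a : Fin (2 * g) => (a : ℕ) < g ∧ (w a : ℕ) + 1 ≤ i)).card
  else
    ((2 * g - i) - (Finset.univ.filter
      (fun a : Fin (2 * g) => (a : ℕ) < g ∧ (w a : ℕ) + 1 ≤ 2 * g - i)).card) + (i - g)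

namespace Stmt4Aux


noncomputable def cnt (g : ℕ) (w : Equiv.Perm (Fin (2*g))) (i : ℕ) : ℕ :=
  (Finset.univ.filter (fun a : Fin (2*g) => (a:ℕ) < g ∧ (w a:ℕ)+1 ≤ i)).card

def Pp (g : ℕ) (w : Equiv.Perm (Fin (2*g))) (i : ℕ) : Prop :=
  ∃ a : Fin (2*g), (a:ℕ) < g ∧ (w a : ℕ) = i

lemma cnt_le (g : ℕ) (w : Equiv.Perm (Fin (2*g))) (i : ℕ) : cnt g w i ≤ i := by
  classical
  have h := Finset.card_le_card_of_injOn (fun a : Fin (2*g) => (w a : ℕ))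
    (s := Finset.univ.filter (fun a : Fin (2*g) => (a:ℕ) < g ∧ (w a:ℕ)+1 ≤ i))
    (t := Finset.range i)
    (fun a ha => by simp at ha ⊢; omega)
    (fun a _ b _ hab => w.injective (Fin.ext hab))
  simpa [cnt] using h

lemma card_first_half (g : ℕ) :
    (Finset.univ.filter fun a : Fin (2*g) => (a:ℕ) < g).card = g := by
  have : (Finset.univ.filter fun a : Fin (2*g) => (a:ℕ) < g).card = (Finset.range g).card := by
    refine Finset.card_bij (fun a _ => (a : ℕ)) ?_ ?_ ?_
    · intro a ha; simp at ha ⊢; exact ha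
    · intro a _ b _ hab; exact Fin.ext hab
    · intro b hb; simp at hb; exact ⟨⟨b, by omega⟩, by simp [hb], rfl⟩
  simpa using this

lemma cnt_top (g : ℕ) (w : Equiv.Perm (Fin (2*g))) : cnt g w (2*g) = g := by
  classical
  rw [cnt, show (Finset.univ.filter (fun a : Fin (2*g) => (a:ℕ) < g ∧ (w a:ℕ)+1 ≤ 2*g))
      = Finset.univ.filter (fun a : Fin (2*g) => (a:ℕ) < g) from
    Finset.filter_congr (fun a _ => by
      have := (w a).isLt; constructor <;> intro h <;> [exact h.1; exact ⟨h, by omega⟩]),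
    card_first_half]

lemma cnt_succ_of (g : ℕ) (w : Equiv.Perm (Fin (2*g))) {i : ℕ} (h : Pp g w i) :
    cnt g w (i+1) = cnt g w i + 1 := by
  classical
  obtain ⟨a, hag, hwa⟩ := h
  have key : (Finset.univ.filter (fun b : Fin (2*g) => (b:ℕ) < g ∧ (w b:ℕ)+1 ≤ i+1))
      = insert a (Finset.univ.filter (fun b : Fin (2*g) => (b:ℕ) < g ∧ (w b:ℕ)+1 ≤ i)) := by
    ext b
    simp only [Finset.mem_filter, Finset.mem_univ, true_and, Finset.mem_insert]
    constructor
    · rintro ⟨hbg, hb⟩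
      rcases Nat.lt_or_ge (w b : ℕ) i with h' | h'
      · exact Or.inr ⟨hbg, by omega⟩
      · have : (w b : ℕ) = i := by omega
        exact Or.inl (w.injective (Fin.ext (by rw [this, hwa])))
    · rintro (rfl | ⟨hbg, hb⟩)
      · exact ⟨hag, by omega⟩
      · exact ⟨hbg, by omega⟩
  rw [cnt, key, Finset.card_insert_of_notMem (by simp [hwa]), cnt]

lemma cnt_succ_of_not (g : ℕ) (w : Equiv.Perm (Fin (2*g))) {i : ℕ} (h : ¬ Pp g w i) :
    cnt g w (i+1) = cnt g w i := by
  classical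
  rw [cnt, cnt]
  congr 1
  apply Finset.filter_congr
  intro b _
  constructor
  · rintro ⟨hbg, hb⟩
    refine ⟨hbg, ?_⟩
    rcases Nat.lt_or_ge (w b : ℕ) i with h' | h'
    · omega
    · exact absurd ⟨b, hbg, by omega⟩ h
  · rintro ⟨hbg, hb⟩; exact ⟨hbg, by omega⟩

lemma val_rev' {g : ℕ} (a : Fin (2*g)) : (a.rev : ℕ) = 2*g - 1 - (a : ℕ) := by
  have := a.isLt; simp [Fin.val_rev]; omega

lemma wrev_val {g : ℕ} {w : Equiv.Perm (Fin (2*g))} (hw : IsFinalPerm g w) (a : Fin (2*g)) :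
    (w a.rev : ℕ) = 2*g - 1 - (w a : ℕ) := by
  have h := hw.1 a
  have := (w a).isLt
  have := (w a.rev).isLt
  omega

lemma pair {g : ℕ} {w : Equiv.Perm (Fin (2*g))} (hw : IsFinalPerm g w) {i : ℕ}
    (hi : i < 2*g) : Pp g w i ↔ ¬ Pp g w (2*g-1-i) := by
  constructor
  · rintro ⟨a, hag, hwa⟩ ⟨b, hbg, hwb⟩
    have h1 : (w a.rev : ℕ) = 2*g-1-i := by rw [wrev_val hw, hwa]
    have hb : b = a.rev := w.injective (Fin.ext (by rw [hwb, h1]))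
    have := val_rev' a
    have := a.isLt
    omega
  · intro h
    set a := w.symm ⟨i, hi⟩ with ha
    have hwa : (w a : ℕ) = i := by rw [ha]; simp
    rcases Nat.lt_or_ge (a : ℕ) g with h' | h'
    · exact ⟨a, h', hwa⟩
    · exfalso
      apply h
      refine ⟨a.rev, ?_, ?_⟩
      · have := val_rev' a; have := a.isLt; omega
      · rw [wrev_val hw, hwa]

lemma cnt_mirror {g : ℕ} {w : Equiv.Perm (Fin (2*g))} (hw : IsFinalPerm g w) :
    ∀ i : ℕ, g ≤ i → i ≤ 2*g → cnt g w i = cnt g w (2*g-i) + (i-g) := by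
  intro i hgi hi2
  induction i, hgi using Nat.le_induction with
  | base => simp [show 2*g-g = g by omega]
  | succ i hgi ih =>
    have hi : i < 2*g := by omega
    have ihh := ih (by omega)
    by_cases hP : Pp g w i
    · have h1 := cnt_succ_of g w hP
      have h2 : ¬ Pp g w (2*g-1-i) := (pair hw hi).mp hP
      have h3 := cnt_succ_of_not g w h2
      rw [show 2*g-1-i+1 = 2*g-i by omega] at h3
      rw [h1, ihh, show 2*g-(i+1) = 2*g-1-i by omega, ← h3]
      omega
    · have h1 := cnt_succ_of_not g w hP
      have h2 : Pp g w (2*g-1-i) := by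
        by_contra h2
        exact hP ((pair hw hi).mpr h2)
      have h3 := cnt_succ_of g w h2
      rw [show 2*g-1-i+1 = 2*g-i by omega] at h3
      rw [h1, ihh, show 2*g-(i+1) = 2*g-1-i by omega, h3]
      omega

lemma psi_eq {g : ℕ} {w : Equiv.Perm (Fin (2*g))} (hw : IsFinalPerm g w) {i : ℕ}
    (hi : i ≤ 2*g) : psiOfPerm g w i = i - cnt g w i := by
  rw [psiOfPerm]
  split
  · rfl
  · rename_i h
    have h1 := cnt_mirror hw i (by omega) hi
    have h2 := cnt_le g w (2*g-i)
    show 2*g-i - cnt g w (2*g-i) + (i-g) = i - cnt g w i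
    omega


lemma g_le (g : ℕ) : g ≤ 2*g := by omega

lemma mono_map {g : ℕ} {w : Equiv.Perm (Fin (2*g))} (hw : IsFinalPerm g w) :
    StrictMono (fun a : Fin g => w (Fin.castLE (g_le g) a)) := by
  intro a b hab
  refine hw.2 _ _ ?_ ?_
  · simp only [Fin.lt_def, Fin.coe_castLE]
    exact hab
  · simpa using b.isLt

lemma image_eq {g : ℕ} {w : Equiv.Perm (Fin (2*g))} :
    Finset.image (fun a : Fin g => w (Fin.castLE (g_le g) a)) Finset.univ
      = Finset.univ.filter (fun v : Fin (2*g) => ∃ a : Fin (2*g), (a:ℕ) < g ∧ w a = v) := by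
  classical
  ext v
  simp only [Finset.mem_image, Finset.mem_univ, true_and, Finset.mem_filter]
  constructor
  · rintro ⟨a, rfl⟩
    exact ⟨Fin.castLE (g_le g) a, by simpa using a.isLt, rfl⟩
  · rintro ⟨b, hbg, rfl⟩
    exact ⟨⟨(b:ℕ), hbg⟩, rfl⟩

lemma injOn (g : ℕ) : Set.InjOn
    (fun w : Equiv.Perm (Fin (2 * g)) => fun i : Fin (2 * g + 1) => psiOfPerm g w (i : ℕ))
    {w | IsFinalPerm g w} := by
  intro w hw w' hw' heq
  classical
  simp only [Set.mem_setOf_eq] at hw hw'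
  have hcnt : ∀ i, i ≤ 2*g → cnt g w i = cnt g w' i := by
    intro i hi
    have h : psiOfPerm g w i = psiOfPerm g w' i := congrFun heq ⟨i, by omega⟩
    rw [psi_eq hw hi, psi_eq hw' hi] at h
    have := cnt_le g w i
    have := cnt_le g w' i
    omega
  have hPP : ∀ i, i < 2*g → (Pp g w i ↔ Pp g w' i) := by
    intro i hi
    have h1 := hcnt i (by omega)
    have h2 := hcnt (i+1) (by omega)
    constructor <;> intro hp <;> by_contra hq
    · have := cnt_succ_of g w hp
      have := cnt_succ_of_not g w' hq
      omega
    · have := cnt_succ_of g w' hp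
      have := cnt_succ_of_not g w hq
      omega
  have hT : Finset.image (fun a : Fin g => w (Fin.castLE (g_le g) a)) Finset.univ
      = Finset.image (fun a : Fin g => w' (Fin.castLE (g_le g) a)) Finset.univ := by
    rw [image_eq, image_eq]
    apply Finset.filter_congr
    intro v _
    have h := hPP (v:ℕ) v.isLt
    simp only [Pp] at h
    constructor
    · rintro ⟨a, hag, rfl⟩
      obtain ⟨b, hbg, hb⟩ := h.mp ⟨a, hag, rfl⟩
      exact ⟨b, hbg, Fin.ext hb⟩
    · rintro ⟨a, hag, rfl⟩
      obtain ⟨b, hbg, hb⟩ := h.mpr ⟨a, hag, rfl⟩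
      exact ⟨b, hbg, Fin.ext hb⟩
  have hcard : (Finset.image (fun a : Fin g => w (Fin.castLE (g_le g) a)) Finset.univ).card
      = g := by
    rw [Finset.card_image_of_injective _ (mono_map hw).injective, Finset.card_univ,
      Fintype.card_fin]
  have hf := Finset.orderEmbOfFin_unique hcard
    (f := fun a : Fin g => w (Fin.castLE (g_le g) a))
    (fun a => Finset.mem_image_of_mem _ (Finset.mem_univ a)) (mono_map hw)
  have hf' := Finset.orderEmbOfFin_unique hcard
    (f := fun a : Fin g => w' (Fin.castLE (g_le g) a))
    (fun a => by rw [hT]; exact Finset.mem_image_of_mem _ (Finset.mem_univ a)) (mono_map hw')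
  have hfirst : ∀ a : Fin g, w (Fin.castLE (g_le g) a) = w' (Fin.castLE (g_le g) a) := by
    intro a
    rw [congrFun hf a, congrFun hf' a]
  apply Equiv.ext
  intro a
  rcases Nat.lt_or_ge (a:ℕ) g with h' | h'
  · have h := hfirst ⟨(a:ℕ), h'⟩
    have e : Fin.castLE (g_le g) (⟨(a:ℕ), h'⟩ : Fin g) = a := Fin.ext (by simp)
    rwa [e] at h
  · have ha : ((a.rev:ℕ)) < g := by
      have := val_rev' a
      have := a.isLt
      omega
    have h := hfirst ⟨(a.rev:ℕ), ha⟩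
    have e : Fin.castLE (g_le g) (⟨(a.rev:ℕ), ha⟩ : Fin g) = a.rev :=
      Fin.ext (by simp)
    rw [e] at h
    have e1 := hw.1 a.rev
    have e2 := hw'.1 a.rev
    rw [Fin.rev_rev] at e1 e2
    have hv : (w a.rev : ℕ) = (w' a.rev : ℕ) := by rw [h]
    exact Fin.ext (by omega)


lemma mapsTo {g : ℕ} {w : Equiv.Perm (Fin (2*g))} (hw : IsFinalPerm g w) :
    IsFinalSeq g (fun i : Fin (2*g+1) => psiOfPerm g w (i : ℕ)) := by
  classical
  refine ⟨?_, ?_, ?_⟩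
  · simp [psiOfPerm]
  · show psiOfPerm g w (2*g) = g
    rw [psi_eq hw le_rfl, cnt_top]
    omega
  · intro i hi
    show psiOfPerm g w i ≤ psiOfPerm g w (i+1) ∧
      psiOfPerm g w (i+1) ≤ psiOfPerm g w i + 1 ∧
      (psiOfPerm g w i < psiOfPerm g w (i+1) ↔
        psiOfPerm g w (2*g-i) = psiOfPerm g w (2*g-i-1))
    rw [psi_eq hw (by omega : i ≤ 2*g), psi_eq hw (by omega : i+1 ≤ 2*g),
      psi_eq hw (by omega : 2*g-i ≤ 2*g), psi_eq hw (by omega : 2*g-i-1 ≤ 2*g)]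
    have e1 : 2*g-i-1 = 2*g-1-i := by omega
    have e2 : 2*g-i = (2*g-1-i) + 1 := by omega
    have hl1 := cnt_le g w i
    have hl2 := cnt_le g w (2*g-1-i)
    by_cases hP : Pp g w i
    · have h1 := cnt_succ_of g w hP
      have h2 := cnt_succ_of_not g w ((pair hw hi).mp hP)
      rw [e1, e2, h2, h1]
      omega
    · have h1 := cnt_succ_of_not g w hP
      have h2 := cnt_succ_of g w (show Pp g w (2*g-1-i) by
        by_contra h2; exact hP ((pair hw hi).mpr h2))
      rw [e1, e2, h2, h1]
      omega


lemma psi_congr {n : ℕ} (ψ : Fin n → ℕ) {x y : ℕ} {p : x < n} {q : y < n} (h : x = y) :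
    ψ ⟨x, p⟩ = ψ ⟨y, q⟩ := by subst h; rfl

lemma filter_card_succ {n : ℕ} (S : Finset (Fin n)) {i : ℕ} (hi : i < n) :
    (S.filter (fun v : Fin n => (v:ℕ) < i+1)).card
      = (S.filter (fun v : Fin n => (v:ℕ) < i)).card + (if (⟨i,hi⟩ : Fin n) ∈ S then 1 else 0) := by
  classical
  by_cases hm : (⟨i,hi⟩ : Fin n) ∈ S
  · rw [if_pos hm]
    have key : S.filter (fun v : Fin n => (v:ℕ) < i+1) = insert ⟨i,hi⟩ (S.filter (fun v : Fin n => (v:ℕ) < i)) := by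
      ext v
      simp only [Finset.mem_filter, Finset.mem_insert]
      constructor
      · rintro ⟨hv, hlt⟩
        rcases Nat.lt_or_ge (v:ℕ) i with h|h
        · exact Or.inr ⟨hv, h⟩
        · exact Or.inl (Fin.ext (show (v:ℕ) = i by omega))
      · rintro (rfl | ⟨hv, hlt⟩)
        · exact ⟨hm, show i < i+1 by omega⟩
        · exact ⟨hv, by omega⟩
    rw [key, Finset.card_insert_of_notMem (by simp)]
  · rw [if_neg hm, Nat.add_zero]
    congr 1
    apply Finset.filter_congr
    intro v hv
    constructor
    · intro h
      rcases Nat.lt_or_ge (v:ℕ) i with h'|h'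
      · exact h'
      · exact absurd (show v = ⟨i,hi⟩ from Fin.ext (show (v:ℕ) = i by omega))
          (by rintro rfl; exact hm hv)
    · intro h; omega

lemma surjOn (g : ℕ) (hg : 1 ≤ g) : Set.SurjOn
    (fun w : Equiv.Perm (Fin (2 * g)) => fun i : Fin (2 * g + 1) => psiOfPerm g w (i : ℕ))
    {w | IsFinalPerm g w} {ψ | IsFinalSeq g ψ} := by
  classical
  intro ψ hψ
  obtain ⟨h0, htop, hstep⟩ := hψ
  set T : Finset (Fin (2*g)) := Finset.univ.filter
    (fun v => ψ ⟨(v:ℕ)+1, by exact Nat.succ_lt_succ v.isLt⟩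
      = ψ ⟨(v:ℕ), by exact Nat.lt_succ_of_lt v.isLt⟩) with hTdef
  have mem_T : ∀ (i : ℕ) (hi : i < 2*g), ((⟨i,hi⟩ : Fin (2*g)) ∈ T ↔
      ψ ⟨i+1, by omega⟩ = ψ ⟨i, by omega⟩) := by
    intro i hi
    rw [hTdef]
    simp only [Finset.mem_filter, Finset.mem_univ, true_and]
  -- counting
  have hNT : ∀ (i : ℕ) (_ : i ≤ 2*g), ψ ⟨i, by omega⟩ + (T.filter (fun v : Fin (2*g) => (v:ℕ) < i)).card = i := by
    intro i
    induction i with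
    | zero =>
      intro _
      have : T.filter (fun v : Fin (2*g) => (v:ℕ) < 0) = ∅ := by
        apply Finset.filter_false_of_mem; intro v _; omega
      rw [h0, this]
      simp
    | succ i ih =>
      intro hi1
      have hi : i < 2*g := by omega
      have ihh := ih (by omega)
      have hs := hstep i hi
      rw [filter_card_succ T hi]
      by_cases hm : (⟨i,hi⟩ : Fin (2*g)) ∈ T
      · have he : ψ ⟨i+1, by omega⟩ = ψ ⟨i, by omega⟩ := (mem_T i hi).mp hm
        rw [if_pos hm, he]
        omega
      · have hne : ψ ⟨i+1, by omega⟩ ≠ ψ ⟨i, by omega⟩ := fun h => hm ((mem_T i hi).mpr h)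
        have he : ψ ⟨i+1, by omega⟩ = ψ ⟨i, by omega⟩ + 1 := by omega
        rw [if_neg hm, he]
        omega
  have hfull : T.filter (fun v : Fin (2*g) => (v:ℕ) < 2*g) = T :=
    Finset.filter_true_of_mem (fun v _ => v.isLt)
  have hcardT : T.card = g := by
    have := hNT (2*g) le_rfl
    rw [hfull, htop] at this
    omega
  -- pairing
  have hpairT : ∀ (i : ℕ) (hi : i < 2*g),
      ((⟨i, hi⟩ : Fin (2*g)) ∈ T ↔ (⟨2*g-1-i, by omega⟩ : Fin (2*g)) ∉ T) := by
    intro i hi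
    have hs := hstep i hi
    have hmt := mem_T i hi
    have hmt2 := mem_T (2*g-1-i) (by omega)
    rw [psi_congr ψ (q := by omega) (show 2*g-1-i+1 = 2*g-i by omega),
      psi_congr ψ (q := by omega) (show 2*g-1-i = 2*g-i-1 by omega)] at hmt2
    constructor
    · intro hm
      rw [hmt2]
      intro hcon
      have := hs.2.2.mpr hcon
      have := hmt.mp hm
      omega
    · intro hm
      rw [hmt2] at hm
      apply hmt.mpr
      have h1 := hs.1
      have h2 : ¬ (ψ ⟨i, by omega⟩ < ψ ⟨i+1, by omega⟩) := fun h => hm (hs.2.2.mp h)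
      omega
  have hpairF : ∀ v : Fin (2*g), v ∈ T ↔ v.rev ∉ T := by
    intro v
    have h := hpairT (v:ℕ) v.isLt
    have e1 : (⟨(v:ℕ), v.isLt⟩ : Fin (2*g)) = v := Fin.ext rfl
    have e2 : (⟨2*g-1-(v:ℕ), by have := v.isLt; omega⟩ : Fin (2*g)) = v.rev :=
      Fin.ext (by rw [val_rev'])
    rwa [e1, e2] at h
  -- the permutation
  set f := T.orderEmbOfFin hcardT with hf
  have hrevlt : ∀ a : Fin (2*g), ¬((a:ℕ) < g) → 2*g-1-(a:ℕ) < g := by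
    intro a h
    have := a.isLt
    omega
  set wfun : Fin (2*g) → Fin (2*g) := fun a =>
    if h : (a:ℕ) < g then f ⟨(a:ℕ), h⟩ else (f ⟨2*g-1-(a:ℕ), hrevlt a h⟩).rev with hwfun
  have winj : Function.Injective wfun := by
    intro a b hab
    by_cases ha : (a:ℕ) < g <;> by_cases hb : (b:ℕ) < g
    · rw [hwfun] at hab
      simp only [dif_pos ha, dif_pos hb] at hab
      have h2 : ((⟨(a:ℕ), ha⟩ : Fin g) : ℕ) = ((⟨(b:ℕ), hb⟩ : Fin g) : ℕ) :=
        congrArg Fin.val (f.injective hab)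
      exact Fin.ext h2
    · exfalso
      rw [hwfun] at hab
      simp only [dif_pos ha, dif_neg hb] at hab
      have h1 : f ⟨(a:ℕ), ha⟩ ∈ T := Finset.orderEmbOfFin_mem T hcardT _
      have h2 : (f ⟨2*g-1-(b:ℕ), hrevlt b hb⟩).rev ∉ T :=
        (hpairF _).mp (Finset.orderEmbOfFin_mem T hcardT _)
      rw [hab] at h1
      exact h2 h1
    · exfalso
      rw [hwfun] at hab
      simp only [dif_neg ha, dif_pos hb] at hab
      have h1 : f ⟨(b:ℕ), hb⟩ ∈ T := Finset.orderEmbOfFin_mem T hcardT _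
      have h2 : (f ⟨2*g-1-(a:ℕ), hrevlt a ha⟩).rev ∉ T :=
        (hpairF _).mp (Finset.orderEmbOfFin_mem T hcardT _)
      rw [← hab] at h1
      exact h2 h1
    · rw [hwfun] at hab
      simp only [dif_neg ha, dif_neg hb] at hab
      have hv : ((⟨2*g-1-(a:ℕ), hrevlt a ha⟩ : Fin g) : ℕ)
          = ((⟨2*g-1-(b:ℕ), hrevlt b hb⟩ : Fin g) : ℕ) :=
        congrArg Fin.val (f.injective (Fin.rev_injective hab))
      simp only [Fin.val_mk] at hv
      have := a.isLt
      have := b.isLt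
      exact Fin.ext (by omega)
  set wperm : Equiv.Perm (Fin (2*g)) := Equiv.ofBijective wfun
    (Finite.injective_iff_bijective.mp winj) with hwperm
  have happ : ∀ a, wperm a = wfun a := fun a => rfl
  have happ1 : ∀ (a : Fin (2*g)) (h : (a:ℕ) < g), wperm a = f ⟨(a:ℕ), h⟩ := by
    intro a h
    rw [happ, hwfun]
    simp only [dif_pos h]
  have happ2 : ∀ (a : Fin (2*g)) (h : ¬((a:ℕ) < g)),
      wperm a = (f ⟨2*g-1-(a:ℕ), hrevlt a h⟩).rev := by
    intro a h
    rw [happ, hwfun]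
    simp only [dif_neg h]
  have hfin : IsFinalPerm g wperm := by
    constructor
    · intro i
      rcases Nat.lt_or_ge (i:ℕ) g with hi | hi
      · have h1 := happ1 i hi
        have hirev : ¬((i.rev:ℕ) < g) := by
          rw [val_rev']
          have := i.isLt
          omega
        have h2 := happ2 i.rev hirev
        have e : (⟨2*g-1-(i.rev:ℕ), hrevlt i.rev hirev⟩ : Fin g) = ⟨(i:ℕ), hi⟩ := by
          apply Fin.ext
          simp only [val_rev']
          have := i.isLt
          omega
        rw [h1, h2, e]
        have := (f ⟨(i:ℕ), hi⟩).isLt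
        rw [val_rev' (f ⟨(i:ℕ), hi⟩)]
        omega
      · have hirev : ((i.rev:ℕ) < g) := by
          rw [val_rev']
          have := i.isLt
          omega
        have h1 := happ2 i (by omega)
        have h2 := happ1 i.rev hirev
        have e : (⟨(i.rev:ℕ), hirev⟩ : Fin g) = ⟨2*g-1-(i:ℕ), hrevlt i (by omega)⟩ := by
          apply Fin.ext
          simp only [val_rev']
        rw [h1, h2, e]
        have := (f ⟨2*g-1-(i:ℕ), hrevlt i (by omega)⟩).isLt
        rw [val_rev' (f ⟨2*g-1-(i:ℕ), hrevlt i (by omega)⟩)]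
        omega
    · intro i j hij hj
      have hi : (i:ℕ) < g := lt_trans hij hj
      rw [happ1 i hi, happ1 j hj]
      exact f.strictMono (show (⟨(i:ℕ),hi⟩ : Fin g) < ⟨(j:ℕ),hj⟩ from hij)
  -- the image equals ψ
  refine ⟨wperm, hfin, ?_⟩
  have hcnt : ∀ k : ℕ, cnt g wperm k = (T.filter (fun v : Fin (2*g) => (v:ℕ) < k)).card := by
    intro k
    refine Finset.card_bij (fun a _ => wperm a) ?_ ?_ ?_
    · intro a ha
      simp only [Finset.mem_filter, Finset.mem_univ, true_and] at ha
      obtain ⟨hag, hlt⟩ := ha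
      rw [Finset.mem_filter]
      constructor
      · show wperm a ∈ T
        rw [happ1 a hag]
        exact Finset.orderEmbOfFin_mem T hcardT _
      · exact hlt
    · intro a _ b _ hab
      exact wperm.injective hab
    · intro v hv
      rw [Finset.mem_filter] at hv
      obtain ⟨hvT, hvk⟩ := hv
      have : v ∈ Set.range f := by
        rw [Finset.range_orderEmbOfFin]
        exact hvT
      obtain ⟨b, hb⟩ := this
      refine ⟨⟨(b:ℕ), by have := b.isLt; omega⟩, ?_, ?_⟩
      · simp only [Finset.mem_filter, Finset.mem_univ, true_and]
        constructor
        · exact b.isLt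
        · have : wperm ⟨(b:ℕ), by have := b.isLt; omega⟩ = v := by
            rw [happ1 _ b.isLt]
            rw [show (⟨(b:ℕ), b.isLt⟩ : Fin g) = b from Fin.ext rfl]
            exact hb
          omega
      · show wperm _ = v
        rw [happ1 _ b.isLt]
        rw [show (⟨(b:ℕ), b.isLt⟩ : Fin g) = b from Fin.ext rfl]
        exact hb
  funext i
  have hi2 : (i:ℕ) ≤ 2*g := by have := i.isLt; omega
  show psiOfPerm g wperm (i:ℕ) = ψ i
  rw [psi_eq hfin hi2, hcnt (i:ℕ)]
  have h2 := hNT (i:ℕ) hi2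
  rw [show (⟨(i:ℕ), by omega⟩ : Fin (2*g+1)) = i from Fin.ext rfl] at h2
  omega


end Stmt4Aux

/-- For every final permutation `w`, the sequence `ψ_w` is a final sequence
of length `g`, and `w ↦ ψ_w` is a bijection from the set of final permutations of
`{1, …, 2g}` onto the set of final sequences of length `g`. -/
theorem stmt4 (g : ℕ) (hg : 1 ≤ g) :
    Set.BijOn (fun w : Equiv.Perm (Fin (2 * g)) =>
        fun i : Fin (2 * g + 1) => psiOfPerm g w (i : ℕ))
      {w | IsFinalPerm g w} {ψ | IsFinalSeq g ψ} := by
  exact ⟨fun w hw => Stmt4Aux.mapsTo hw, Stmt4Aux.injOn g, Stmt4Aux.surjOn g hg⟩
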